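/- (Halfway Lemma) Let N be a complete Riemannian manifold and x0 ∈ N. Then there exists an ordered set of independent generators {g_1, g_2, g_3, ...} of π₁(N,x0) with minimal representative geodesic loops γ_k of lengths d_k such that d_N(γ_k(0), γ_k(d_k/2)) = d_k/2 for every k. If π₁(N,x0) is infinitely generated, this is an infinite sequence of such generators. -/

import Mathlib

open Metric MeasureTheory Filter ENNReal
open scoped Manifold

/-- `γ` is a unit-speed minimal geodesic on the interval `[a,b]`:
it realizes distances there. -/
def IsMinGeodesicOn {M : Type*} [MetricSpace M] (γ : ℝ → M) (a b : ℝ) : Prop :=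
  ∀ s ∈ Set.Icc a b, ∀ t ∈ Set.Icc a b, dist (γ s) (γ t) = |s - t|

/-- `(M,d)` is a geodesic metric space: any two points are joined by a minimal geodesic.
This holds for the distance of any complete Riemannian manifold. -/
def IsGeodesicMetricSpace (M : Type*) [MetricSpace M] : Prop :=
  ∀ x y : M, ∃ γ : ℝ → M, γ 0 = x ∧ γ (dist x y) = y ∧ IsMinGeodesicOn γ 0 (dist x y)

/-- The length of a path in a metric space, as its total variation. -/
noncomputable def pathELength {X : Type*} [MetricSpace X] {x y : X} (p : Path x y) : ℝ≥0∞ :=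
  eVariationOn p Set.univ

attribute [local instance] Path.Homotopic.setoid

/-- The homotopy class of a loop, as an element of the fundamental group. -/
noncomputable def loopClass {X : Type*} [TopologicalSpace X] {x : X} (p : Path x x) :
    FundamentalGroup X x :=
  FundamentalGroup.fromArrow
    (show FundamentalGroupoid.mk x ⟶ FundamentalGroupoid.mk x from ⟦p⟧)

/-- The universal (metric) cover of a pointed metric space `(N, x0)`, together with its
deck transformation action by the fundamental group `π₁(N, x0)`.  The covering projection
is a local isometry, so that the distance on the cover is the lifted (Riemannian)
distance; the deck transformations act freely and transitively on fibers, by isometries,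
and `deck g (basept)` is the endpoint of the lift starting at `basept` of any loop
representing `g` (monodromy). -/
structure UniversalCoverSetup (N : Type) [MetricSpace N] (x0 : N) where
  cover : Type
  covMetric : MetricSpace cover
  proj : cover → N
  basept : cover
  proj_base : proj basept = x0
  covering : IsCoveringMap proj
  simplyConnected : SimplyConnectedSpace cover
  complete : CompleteSpace cover
  geodesic : IsGeodesicMetricSpace cover
  locIsom : ∀ x : cover, ∃ ε > (0 : ℝ), ∀ y ∈ Metric.ball x ε, ∀ z ∈ Metric.ball x ε,
    dist (proj y) (proj z) = dist y z
  deck : FundamentalGroup N x0 →* (cover ≃ᵢ cover)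
  deck_proj : ∀ (g : FundamentalGroup N x0) (x : cover), proj (deck g x) = proj x
  deck_free : ∀ (g : FundamentalGroup N x0) (x : cover), deck g x = x → g = 1
  deck_transitive : ∀ x y : cover, proj x = proj y → ∃ g : FundamentalGroup N x0, deck g x = y
  monodromy : ∀ (g : FundamentalGroup N x0) (q : Path basept (deck g basept)),
    loopClass ((q.map covering.continuous).cast proj_base.symm
      (((deck_proj g basept).trans proj_base).symm)) = g

attribute [instance] UniversalCoverSetup.covMetric

namespace UniversalCoverSetup

variable {N : Type} [MetricSpace N] {x0 : N}

/-- The length `d_Ñ(x̃0, g·x̃0)` associated to an element `g` of the fundamental group: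
the length of a minimal representative geodesic loop of `g`. -/
noncomputable def len (S : UniversalCoverSetup N x0) (g : FundamentalGroup N x0) : ℝ :=
  dist S.basept (S.deck g S.basept)

/-- `γt` is (the lift of) a minimal representative geodesic loop of `g`: a minimal
geodesic in the universal cover from `x̃0` to `g·x̃0`, parametrized by arclength. -/
def IsMinRepLift (S : UniversalCoverSetup N x0) (g : FundamentalGroup N x0)
    (γt : ℝ → S.cover) : Prop :=
  γt 0 = S.basept ∧ γt (S.len g) = S.deck g S.basept ∧ IsMinGeodesicOn γt 0 (S.len g)

end UniversalCoverSetup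

section Auxiliary

open Metric

private lemma locToGlob {X : Type*} [MetricSpace X] {f : ℝ → X} {a b K : ℝ}
    (hf : ContinuousOn f (Set.Icc a b))
    (hloc : ∀ u ∈ Set.Icc a b, ∃ ε > (0:ℝ), ∀ s ∈ Set.Icc a b, ∀ t ∈ Set.Icc a b,
      |s - u| < ε → |t - u| < ε → dist (f s) (f t) ≤ K * |s - t|) :
    ∀ s ∈ Set.Icc a b, ∀ t ∈ Set.Icc a b, dist (f s) (f t) ≤ K * |s - t| := by
  have key : ∀ s ∈ Set.Icc a b, ∀ t ∈ Set.Icc a b, s ≤ t → dist (f s) (f t) ≤ K * (t - s) := by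
    intro s hs
    have hsub : Set.Icc s b ⊆ Set.Icc a b := Set.Icc_subset_Icc hs.1 le_rfl
    have main : Set.Icc s b ⊆ {t | dist (f s) (f t) ≤ K * (t - s)} := by
      apply IsClosed.Icc_subset_of_forall_exists_gt
      · have heq : {t | dist (f s) (f t) ≤ K * (t - s)} ∩ Set.Icc s b =
            Set.Icc s b ∩ (fun t => dist (f s) (f t) - K * (t - s)) ⁻¹' Set.Iic 0 := by
          ext t
          simp only [Set.mem_inter_iff, Set.mem_setOf_eq, Set.mem_preimage, Set.mem_Iic,
            sub_nonpos, and_comm]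
        rw [heq]
        apply ContinuousOn.preimage_isClosed_of_isClosed _ isClosed_Icc isClosed_Iic
        apply ContinuousOn.sub
        · exact (continuous_const.dist continuous_id).comp_continuousOn (hf.mono hsub)
        · exact (continuous_const.mul (continuous_id.sub continuous_const)).continuousOn
      · simp
      · rintro x ⟨hxC, hxI⟩ y hy
        have hxab : x ∈ Set.Icc a b := hsub ⟨hxI.1, hxI.2.le⟩
        obtain ⟨ε, εpos, hε⟩ := hloc x hxab
        set t' := min (min y b) (x + ε / 2) with ht'def
        have hxt' : x < t' := lt_min (lt_min hy hxI.2) (by linarith)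
        have ht'b : t' ≤ b := (min_le_left _ _).trans (min_le_right _ _)
        have ht'ab : t' ∈ Set.Icc a b := ⟨hxab.1.trans hxt'.le, ht'b⟩
        have ht'x : t' - x ≤ ε / 2 := by
          have := min_le_right (min y b) (x + ε / 2); linarith
        have habs : |t' - x| < ε := by
          rw [abs_of_nonneg (by linarith)]; linarith
        have hd : dist (f x) (f t') ≤ K * |t' - x| := by
          have := hε x hxab t' ht'ab (by simpa using εpos) habs
          rwa [abs_sub_comm] at this
        refine ⟨t', ?_, hxt', (min_le_left _ _).trans (min_le_left _ _)⟩
        have htri := dist_triangle (f s) (f x) (f t')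
        have : K * |t' - x| = K * (t' - x) := by rw [abs_of_nonneg (by linarith)]
        rw [this] at hd
        have : dist (f s) (f t') ≤ K * (x - s) + K * (t' - x) := le_trans htri (add_le_add hxC hd)
        calc dist (f s) (f t') ≤ K * (x - s) + K * (t' - x) := this
          _ = K * (t' - s) := by ring
    intro t _ hst
    exact main ⟨hst, ‹t ∈ Set.Icc a b›.2⟩
  intro s hs t ht
  rcases le_total s t with h | h
  · have := key s hs t ht h
    rwa [abs_of_nonpos (by linarith), neg_sub]
  · have := key t ht s hs h
    rw [dist_comm] at this
    rwa [abs_of_nonneg (by linarith)]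

private lemma IsMinGeodesicOn.continuousOn' {X : Type*} [MetricSpace X] {γ : ℝ → X} {a b : ℝ}
    (h : IsMinGeodesicOn γ a b) : ContinuousOn γ (Set.Icc a b) := by
  apply LipschitzOnWith.continuousOn (K := 1)
  apply LipschitzOnWith.of_dist_le_mul
  intro s hs t ht
  rw [h s hs t ht, NNReal.coe_one, one_mul, Real.dist_eq]

private lemma compact_closedBall_of_geodesic {X : Type*} [MetricSpace X] [CompleteSpace X]
    (geo : IsGeodesicMetricSpace X)
    (hloc : ∀ x : X, ∃ ε > (0:ℝ), IsCompact (closedBall x ε)) :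
    ∀ (x : X) (r : ℝ), IsCompact (closedBall x r) := by
  intro x r
  by_contra hr
  set A : Set ℝ := {ρ | IsCompact (closedBall x ρ)} with hA
  have mono : ∀ {ρ ρ' : ℝ}, ρ' ≤ ρ → ρ ∈ A → ρ' ∈ A := fun h hρ =>
    hρ.of_isClosed_subset isClosed_closedBall (closedBall_subset_closedBall h)
  obtain ⟨ε0, ε0pos, hε0⟩ := hloc x
  have h0 : (0:ℝ) ∈ A := mono ε0pos.le hε0
  have hrpos : 0 < r := by
    by_contra h; push_neg at h
    exact hr (mono (h.trans ε0pos.le) hε0)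
  -- successor step
  have succ : ∀ ρ ∈ A, 0 ≤ ρ → ∃ δ > (0:ℝ), ρ + δ ∈ A := by
    intro ρ hρ hρ0
    classical
    choose εf εfpos hεf using hloc
    have hcov : closedBall x ρ ⊆ ⋃ y ∈ closedBall x ρ, ball y (εf y / 2) := fun z hz =>
      Set.mem_biUnion hz (mem_ball_self (by have := εfpos z; linarith))
    obtain ⟨t, htsub, htfin, htcov⟩ :=
      hρ.elim_finite_subcover_image (fun y _ => isOpen_ball) hcov
    have hxmem : x ∈ closedBall x ρ := mem_closedBall_self hρ0
    have htne : t.Nonempty := by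
      obtain ⟨y, hy, -⟩ := Set.mem_iUnion₂.1 (htcov hxmem)
      exact ⟨y, hy⟩
    have htfinne : htfin.toFinset.Nonempty := by
      obtain ⟨y, hy⟩ := htne; exact ⟨y, htfin.mem_toFinset.2 hy⟩
    set δ := htfin.toFinset.inf' htfinne (fun y => εf y / 2) with hδdef
    have δpos : 0 < δ := by
      rw [hδdef, Finset.lt_inf'_iff]
      intro y _; have := εfpos y; linarith
    have hδle : ∀ y ∈ t, δ ≤ εf y / 2 := fun y hy =>
      Finset.inf'_le _ (htfin.mem_toFinset.2 hy)
    refine ⟨δ, δpos, ?_⟩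
    have hsub2 : closedBall x (ρ + δ) ⊆ ⋃ y ∈ t, closedBall y (εf y) := by
      intro z hz
      rcases le_or_gt (dist x z) ρ with hd | hd
      · obtain ⟨y, hy, hyz⟩ := Set.mem_iUnion₂.1 (htcov (by rwa [mem_closedBall, dist_comm]))
        refine Set.mem_biUnion hy ?_
        have := mem_ball.1 hyz
        exact mem_closedBall.2 (by have := εfpos y; linarith)
      · obtain ⟨γ, hγ0, hγd, hγ⟩ := geo x z
        have hD0 : 0 ≤ dist x z := dist_nonneg
        have hDle : dist x z ≤ ρ + δ := by rw [mem_closedBall, dist_comm] at hz; exact hz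
        have hρD : ρ ∈ Set.Icc 0 (dist x z) := ⟨hρ0, hd.le⟩
        have h0D : (0:ℝ) ∈ Set.Icc 0 (dist x z) := ⟨le_rfl, hD0⟩
        have hDD : dist x z ∈ Set.Icc 0 (dist x z) := ⟨hD0, le_rfl⟩
        have hw : γ ρ ∈ closedBall x ρ := by
          have h01 := hγ 0 h0D ρ hρD
          rw [hγ0] at h01
          rw [mem_closedBall, dist_comm, h01, zero_sub, abs_neg, abs_of_nonneg hρ0]
        have hwz : dist (γ ρ) z ≤ δ := by
          have := hγ ρ hρD (dist x z) hDD
          rw [hγd] at this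
          rw [this, abs_of_nonpos (by linarith)]
          linarith
        obtain ⟨y, hy, hyw⟩ := Set.mem_iUnion₂.1 (htcov hw)
        refine Set.mem_biUnion hy ?_
        have h1 := mem_ball.1 hyw
        have h2 := hδle y hy
        have := dist_triangle z (γ ρ) y
        rw [mem_closedBall]
        rw [dist_comm] at hwz
        linarith
    exact IsCompact.of_isClosed_subset
      (htfin.isCompact_biUnion (fun y _ => hεf y)) isClosed_closedBall hsub2
  -- limit step
  have limit : ∀ ρ > (0:ℝ), (∀ ρ' < ρ, ρ' ∈ A) → ρ ∈ A := by
    intro ρ hρpos hall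
    apply TotallyBounded.isCompact_of_isClosed _ isClosed_closedBall
    rw [totallyBounded_iff]
    intro δ δpos
    set η := min (ρ/2) (δ/3) with hηdef
    have ηpos : 0 < η := lt_min (by linarith) (by linarith)
    have hηρ : η ≤ ρ/2 := min_le_left _ _
    have hηδ : η ≤ δ/3 := min_le_right _ _
    have hcomp : IsCompact (closedBall x (ρ - η)) := hall _ (by linarith)
    obtain ⟨t, htfin, htcov⟩ := (totallyBounded_iff.1 hcomp.totallyBounded) (δ/3) (by linarith)
    refine ⟨t, htfin, ?_⟩
    intro z hz
    obtain ⟨γ, hγ0, hγd, hγ⟩ := geo x z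
    have hD0 : 0 ≤ dist x z := dist_nonneg
    have hDρ : dist x z ≤ ρ := by rwa [mem_closedBall, dist_comm] at hz
    set u := max 0 (dist x z - η) with hudef
    have hu : u ∈ Set.Icc 0 (dist x z) := ⟨le_max_left _ _, max_le hD0 (by linarith)⟩
    have h0D : (0:ℝ) ∈ Set.Icc 0 (dist x z) := ⟨le_rfl, hD0⟩
    have hDD : dist x z ∈ Set.Icc 0 (dist x z) := ⟨hD0, le_rfl⟩
    have h2 : γ u ∈ closedBall x (ρ - η) := by
      have := hγ 0 h0D u hu
      rw [hγ0] at this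
      have habs : |0 - u| = u := by rw [zero_sub, abs_neg, abs_of_nonneg hu.1]
      rw [mem_closedBall, dist_comm, this, habs]
      rw [hudef]
      apply max_le (by linarith)
      linarith
    have h3 : dist (γ u) z ≤ η := by
      have := hγ u hu (dist x z) hDD
      rw [hγd] at this
      rw [this, abs_of_nonpos (sub_nonpos.2 hu.2)]
      rw [hudef]
      rcases le_total (dist x z - η) 0 with h | h
      · rw [max_eq_left h]; linarith
      · rw [max_eq_right h]; linarith
    obtain ⟨y, hy, hyu⟩ := Set.mem_iUnion₂.1 (htcov h2)
    refine Set.mem_biUnion hy ?_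
    have h4 := mem_ball.1 hyu
    have := dist_triangle z (γ u) y
    rw [mem_ball]
    rw [dist_comm] at h3
    linarith
  -- conclusion
  have hbdd : BddAbove (A ∩ Set.Icc 0 r) := ⟨r, fun z hz => hz.2.2⟩
  have hmem0 : (0:ℝ) ∈ A ∩ Set.Icc 0 r := ⟨h0, le_rfl, hrpos.le⟩
  have hne : (A ∩ Set.Icc 0 r).Nonempty := ⟨0, hmem0⟩
  set c := sSup (A ∩ Set.Icc 0 r) with hcdef
  have hc0 : 0 ≤ c := le_csSup hbdd hmem0
  have hcr : c ≤ r := csSup_le hne fun z hz => hz.2.2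
  have hcA : c ∈ A := by
    rcases eq_or_lt_of_le hc0 with h | h
    · rwa [← h]
    · refine limit c h ?_
      intro ρ' hρ'
      obtain ⟨z, hz, hz'⟩ := exists_lt_of_lt_csSup hne hρ'
      exact mono hz'.le hz.1
  obtain ⟨δ, δpos, hδ⟩ := succ c hcA hc0
  have hminmem : min (c + δ) r ∈ A ∩ Set.Icc 0 r :=
    ⟨mono (min_le_left _ _) hδ, le_min (by linarith) hrpos.le, min_le_right _ _⟩
  have hle := le_csSup hbdd hminmem
  rcases le_or_gt (c + δ) r with h | h
  · rw [min_eq_left h] at hle; linarith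
  · rw [min_eq_right h.le] at hle
    have : c = r := le_antisymm hcr hle
    exact hr (this ▸ hcA)

namespace UniversalCoverSetup

variable {N : Type} [MetricSpace N] {x0 : N}

private lemma cover_locCompact (S : UniversalCoverSetup N x0)
    (hN : ∀ (q : N) (r : ℝ), IsCompact (closedBall q r)) :
    ∀ x : S.cover, ∃ ε > (0:ℝ), IsCompact (closedBall x ε) := by
  classical
  haveI := S.complete
  intro x
  obtain ⟨ε, εpos, hε⟩ := S.locIsom x
  refine ⟨ε/4, by linarith, ?_⟩
  apply TotallyBounded.isCompact_of_isClosed _ isClosed_closedBall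
  rw [totallyBounded_iff]
  intro δ δpos
  have hsub : closedBall x (ε/4) ⊆ ball x ε := closedBall_subset_ball (by linarith)
  have hBtb := (totallyBounded_iff.1 (hN (S.proj x) (ε/4)).totallyBounded) (δ/4) (by linarith)
  obtain ⟨t, htfin, htcov⟩ := hBtb
  set pick : N → S.cover := fun p =>
    if h : ∃ c ∈ closedBall x (ε/4), dist (S.proj c) p < δ/4 then h.choose else x
    with hpickdef
  refine ⟨pick '' t, htfin.image _, ?_⟩
  intro c hc
  have hcball : c ∈ ball x ε := hsub hc
  have hxball : x ∈ ball x ε := mem_ball_self εpos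
  have hpc : S.proj c ∈ closedBall (S.proj x) (ε/4) := by
    rw [mem_closedBall, hε c hcball x hxball]
    exact mem_closedBall.1 hc
  obtain ⟨p, hp, hcp⟩ := Set.mem_iUnion₂.1 (htcov hpc)
  have hex : ∃ c' ∈ closedBall x (ε/4), dist (S.proj c') p < δ/4 := ⟨c, hc, mem_ball.1 hcp⟩
  have hpickp : pick p = hex.choose := by rw [hpickdef]; exact dif_pos hex
  obtain ⟨hc'ball, hc'p⟩ := hex.choose_spec
  refine Set.mem_biUnion (Set.mem_image_of_mem pick hp) ?_
  rw [mem_ball, hpickp]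
  rw [← hε c hcball hex.choose (hsub hc'ball)]
  have h1 := mem_ball.1 hcp
  have := dist_triangle (S.proj c) p (S.proj hex.choose)
  rw [dist_comm p (S.proj hex.choose)] at this
  linarith

private lemma len_finite (S : UniversalCoverSetup N x0)
    (hcpt : ∀ (x : S.cover) (r : ℝ), IsCompact (closedBall x r)) (R : ℝ) :
    {g : FundamentalGroup N x0 | S.len g ≤ R}.Finite := by
  have hfiber : DiscreteTopology ↥(S.proj ⁻¹' {x0}) := (S.covering x0).1
  set T := S.proj ⁻¹' {x0} ∩ closedBall S.basept R with hT
  have hTfin : T.Finite := by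
    apply IsCompact.finite
    · exact (hcpt S.basept R).of_isClosed_subset
        ((IsClosed.preimage S.covering.continuous isClosed_singleton).inter isClosed_closedBall)
        Set.inter_subset_right
    · exact isDiscrete_iff_discreteTopology.mpr (DiscreteTopology.of_subset hfiber Set.inter_subset_left)
  apply Set.Finite.of_finite_image (f := fun g => S.deck g S.basept)
  · apply hTfin.subset
    rintro _ ⟨g, hg, rfl⟩
    refine ⟨by simp [S.deck_proj, S.proj_base], ?_⟩
    rw [mem_closedBall, dist_comm]
    exact hg
  · intro g hg g' hg' h
    have h' : S.deck g S.basept = S.deck g' S.basept := h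
    have key : S.deck (g'⁻¹ * g) S.basept = S.basept := by
      rw [map_mul, IsometryEquiv.mul_apply, h', ← IsometryEquiv.mul_apply, ← map_mul,
        inv_mul_cancel, map_one]
      rfl
    have := S.deck_free _ _ key
    rwa [inv_mul_eq_one, eq_comm] at this

private lemma exists_min (S : UniversalCoverSetup N x0)
    (hcpt : ∀ (x : S.cover) (r : ℝ), IsCompact (closedBall x r))
    (H : Subgroup (FundamentalGroup N x0)) (hH : H ≠ ⊤) :
    ∃ g, g ∉ H ∧ ∀ k, k ∉ H → S.len g ≤ S.len k := by
  obtain ⟨h0, hh0⟩ : ∃ h0, h0 ∉ H := by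
    by_contra hcon; push_neg at hcon
    exact hH ((Subgroup.eq_top_iff' H).2 hcon)
  set F := {k | S.len k ≤ S.len h0 ∧ k ∉ H} with hF
  have hFfin : F.Finite := (len_finite S hcpt (S.len h0)).subset fun k hk => hk.1
  have hFne : F.Nonempty := ⟨h0, le_rfl, hh0⟩
  obtain ⟨g, hgF, hgmin⟩ := Set.exists_min_image F S.len hFfin hFne
  refine ⟨g, hgF.2, ?_⟩
  intro k hk
  rcases le_or_gt (S.len k) (S.len h0) with h | h
  · exact hgmin k ⟨h, hk⟩
  · exact (hgmin h0 ⟨le_rfl, hh0⟩).trans h.le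

private lemma exists_lift_pt (S : UniversalCoverSetup N x0)
    (hcpt : ∀ (x : S.cover) (r : ℝ), IsCompact (closedBall x r))
    {e : ℝ} {σ : ℝ → N} (he : 0 ≤ e)
    (hσ : IsMinGeodesicOn σ 0 e) (z : S.cover) (hz : S.proj z = σ 0) :
    ∃ u : S.cover, S.proj u = σ e ∧ dist z u ≤ e := by
  classical
  set A := {t : ℝ | t ∈ Set.Icc 0 e ∧ ∃ w, S.proj w = σ t ∧ dist z w ≤ t} with hAdef
  have h0A : (0:ℝ) ∈ A := ⟨⟨le_rfl, he⟩, z, hz, by simp⟩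
  have hAne : A.Nonempty := ⟨0, h0A⟩
  have hbdd : BddAbove A := ⟨e, fun t ht => ht.1.2⟩
  set c := sSup A with hcdef
  have hcIcc : c ∈ Set.Icc 0 e := ⟨le_csSup hbdd h0A, csSup_le hAne fun t ht => ht.1.2⟩
  have hcA : c ∈ A := by
    refine ⟨hcIcc, ?_⟩
    have hseq : ∀ n : ℕ, ∃ t ∈ A, c - 1/(n+1) < t := by
      intro n
      apply exists_lt_of_lt_csSup hAne
      have : (0:ℝ) < 1/(n+1) := by positivity
      linarith
    choose ts hts hlt using hseq
    choose ws hws hdws using fun n => (hts n).2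
    have hwball : ∀ n, ws n ∈ closedBall z e := fun n =>
      mem_closedBall'.2 ((hdws n).trans (hts n).1.2)
    obtain ⟨w, hwmem, φ, hφ, hconv⟩ := (hcpt z e).tendsto_subseq hwball
    have hts_le : ∀ n, ts n ≤ c := fun n => le_csSup hbdd (hts n)
    have htconv : Filter.Tendsto (fun n => ts (φ n)) Filter.atTop (nhds c) := by
      apply tendsto_of_tendsto_of_tendsto_of_le_of_le
        (g := fun n : ℕ => c - 1/(n+1)) (h := fun _ : ℕ => c)
      · have h1 : Filter.Tendsto (fun n : ℕ => 1/((n:ℝ)+1)) Filter.atTop (nhds 0) :=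
          tendsto_one_div_add_atTop_nhds_zero_nat
        have h2 : Filter.Tendsto (fun _ : ℕ => c) Filter.atTop (nhds c) := tendsto_const_nhds
        simpa using h2.sub h1
      · exact tendsto_const_nhds
      · intro n
        have h1 := hlt (φ n)
        have hφn : (n:ℝ) ≤ (φ n : ℝ) := by exact_mod_cast hφ.le_apply
        have h2 : (1:ℝ)/(φ n + 1) ≤ 1/(n+1) := by
          apply one_div_le_one_div_of_le (by positivity)
          linarith
        linarith
      · exact fun n => hts_le (φ n)
    refine ⟨w, ?_, ?_⟩
    · have h1 : Filter.Tendsto (fun n => S.proj (ws (φ n))) Filter.atTop (nhds (S.proj w)) :=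
        (S.covering.continuous.tendsto w).comp hconv
      have h2 : Filter.Tendsto (fun n => σ (ts (φ n))) Filter.atTop (nhds (σ c)) := by
        have hσc : ContinuousWithinAt σ (Set.Icc 0 e) c :=
          (hσ.continuousOn' c hcIcc)
        apply hσc.tendsto.comp
        apply tendsto_nhdsWithin_of_tendsto_nhds_of_eventually_within _ htconv
        exact Filter.Eventually.of_forall fun n => (hts (φ n)).1
      have heq : (fun n => S.proj (ws (φ n))) = fun n => σ (ts (φ n)) := by
        funext n; exact hws (φ n)
      rw [heq] at h1
      exact tendsto_nhds_unique h1 h2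
    · have h1 : Filter.Tendsto (fun n => dist z (ws (φ n))) Filter.atTop (nhds (dist z w)) :=
        tendsto_const_nhds.dist hconv
      exact le_of_tendsto_of_tendsto' h1 htconv fun n => hdws (φ n)
  rcases eq_or_lt_of_le hcIcc.2 with hce | hce
  · obtain ⟨-, w, hw1, hw2⟩ := hcA
    exact ⟨w, by rwa [hce] at hw1, by rwa [hce] at hw2⟩
  · exfalso
    obtain ⟨-, w, hw1, hw2⟩ := hcA
    obtain ⟨ε, εpos, hε⟩ := S.locIsom w
    have hopen : IsOpen (S.proj '' ball w ε) := S.covering.isOpenMap _ isOpen_ball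
    have hmem : σ c ∈ S.proj '' ball w ε := ⟨w, mem_ball_self εpos, hw1⟩
    obtain ⟨ρ, ρpos, hρ⟩ := Metric.isOpen_iff.1 hopen _ hmem
    set t' := min e (c + ρ/2) with ht'def
    have hct' : c < t' := lt_min hce (by linarith)
    have ht'Icc : t' ∈ Set.Icc 0 e := ⟨hcIcc.1.trans hct'.le, min_le_left _ _⟩
    have hdist : dist (σ c) (σ t') = t' - c := by
      rw [hσ c hcIcc t' ht'Icc, abs_of_nonpos (by linarith), neg_sub]
    have ht'c : t' - c ≤ ρ/2 := by
      have := min_le_right e (c + ρ/2); linarith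
    have hσt' : σ t' ∈ ball (σ c) ρ := by
      rw [mem_ball, dist_comm, hdist]; linarith
    obtain ⟨w', hw'ball, hw'⟩ := hρ hσt'
    have hdw : dist w w' = t' - c := by
      rw [← hε w (mem_ball_self εpos) w' hw'ball, hw1, hw', hdist]
    have ht'A : t' ∈ A := by
      refine ⟨ht'Icc, w', hw', ?_⟩
      have := dist_triangle z w w'
      rw [hdw] at this
      linarith
    have := le_csSup hbdd ht'A
    linarith

private lemma halfway_key (S : UniversalCoverSetup N x0)
    (hgeoN : IsGeodesicMetricSpace N)
    (hcpt : ∀ (x : S.cover) (r : ℝ), IsCompact (closedBall x r))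
    {H : Subgroup (FundamentalGroup N x0)} {g : FundamentalGroup N x0}
    (hg : g ∉ H) (hmin : ∀ k, k ∉ H → S.len g ≤ S.len k) :
    ∃ γt : ℝ → S.cover, S.IsMinRepLift g γt ∧
      dist (S.proj (γt 0)) (S.proj (γt (S.len g / 2))) = S.len g / 2 := by
  obtain ⟨γ, hγ0, hγd, hγ⟩ := S.geodesic S.basept (S.deck g S.basept)
  have hdd : S.len g = dist S.basept (S.deck g S.basept) := rfl
  set d := S.len g with hd
  have hd0 : 0 ≤ d := hdd ▸ dist_nonneg
  rw [← hdd] at hγd hγ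
  refine ⟨γ, ⟨hγ0, hγd, hγ⟩, ?_⟩
  have hmem0 : (0:ℝ) ∈ Set.Icc 0 d := ⟨le_rfl, hd0⟩
  have hmemd2 : d/2 ∈ Set.Icc 0 d := ⟨by linarith, by linarith⟩
  have hmemd : d ∈ Set.Icc 0 d := ⟨hd0, le_rfl⟩
  -- the easy inequality
  have hle : dist (S.proj (γ 0)) (S.proj (γ (d/2))) ≤ d/2 := by
    have hcont : ContinuousOn (S.proj ∘ γ) (Set.Icc 0 d) :=
      S.covering.continuous.comp_continuousOn hγ.continuousOn'
    have hloc : ∀ u ∈ Set.Icc 0 d, ∃ ε > (0:ℝ), ∀ s ∈ Set.Icc 0 d, ∀ t ∈ Set.Icc 0 d,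
        |s - u| < ε → |t - u| < ε → dist ((S.proj ∘ γ) s) ((S.proj ∘ γ) t) ≤ 1 * |s - t| := by
      intro u hu
      obtain ⟨ε, εpos, hε⟩ := S.locIsom (γ u)
      refine ⟨ε, εpos, fun s hs t ht hsu htu => ?_⟩
      have hsball : γ s ∈ ball (γ u) ε := by rw [mem_ball, hγ s hs u hu]; exact hsu
      have htball : γ t ∈ ball (γ u) ε := by rw [mem_ball, hγ t ht u hu]; exact htu
      have : dist ((S.proj ∘ γ) s) ((S.proj ∘ γ) t) = |s - t| := by
        show dist (S.proj (γ s)) (S.proj (γ t)) = |s - t|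
        rw [hε (γ s) hsball (γ t) htball, hγ s hs t ht]
      rw [this, one_mul]
    have := locToGlob hcont hloc 0 hmem0 (d/2) hmemd2
    have habs : |(0:ℝ) - d/2| = d/2 := by
      rw [zero_sub, abs_neg, abs_of_nonneg (by linarith)]
    rw [habs, one_mul] at this
    exact this
  refine le_antisymm hle ?_
  by_contra hlt
  push_neg at hlt
  obtain ⟨σ, hσ0, hσe, hσ⟩ := hgeoN (S.proj (γ 0)) (S.proj (γ (d/2)))
  set e := dist (S.proj (γ 0)) (S.proj (γ (d/2))) with hedef
  have he0 : 0 ≤ e := dist_nonneg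
  obtain ⟨u, hu, hdu⟩ := S.exists_lift_pt hcpt he0 hσ (γ 0) hσ0.symm
  have hup : S.proj u = S.proj (γ (d/2)) := by rw [hu, hσe]
  obtain ⟨a, ha⟩ := S.deck_transitive u (γ (d/2)) hup
  set b := a⁻¹ * g with hbdef
  have hab : a * b = g := by rw [hbdef]; group
  have hdeckab : S.deck a (S.deck b S.basept) = S.deck g S.basept := by
    rw [← IsometryEquiv.mul_apply, ← map_mul, hab]
  have h1 : dist S.basept (γ (d/2)) = d/2 := by
    have := hγ 0 hmem0 (d/2) hmemd2
    rw [hγ0] at this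
    rw [this, zero_sub, abs_neg, abs_of_nonneg (by linarith)]
  have h2 : dist (γ (d/2)) (S.deck g S.basept) = d/2 := by
    have := hγ (d/2) hmemd2 d hmemd
    rw [hγd] at this
    rw [this, abs_of_nonpos (by linarith), neg_sub]
    ring
  have hu' : dist S.basept u ≤ e := by rw [← hγ0]; exact hdu
  have hlena : S.len a < d := by
    have tri := dist_triangle S.basept (γ (d/2)) (S.deck a S.basept)
    have e1 : dist (γ (d/2)) (S.deck a S.basept) = dist u S.basept := by
      rw [← ha, IsometryEquiv.dist_eq]
    have : S.len a = dist S.basept (S.deck a S.basept) := rfl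
    rw [this]
    rw [e1, h1, dist_comm u S.basept] at tri
    calc dist S.basept (S.deck a S.basept) ≤ d/2 + dist S.basept u := tri
      _ ≤ d/2 + e := by linarith
      _ < d := by linarith
  have hlenb : S.len b < d := by
    have : S.len b = dist S.basept (S.deck b S.basept) := rfl
    rw [this]
    have e1 : dist S.basept (S.deck b S.basept)
        = dist (S.deck a S.basept) (S.deck g S.basept) := by
      rw [← hdeckab, IsometryEquiv.dist_eq]
    have e2 : dist (S.deck a S.basept) (γ (d/2)) = dist S.basept u := by
      rw [← ha, IsometryEquiv.dist_eq]
    have tri := dist_triangle (S.deck a S.basept) (γ (d/2)) (S.deck g S.basept)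
    rw [e2, h2] at tri
    rw [e1]
    calc dist (S.deck a S.basept) (S.deck g S.basept) ≤ dist S.basept u + d/2 := tri
      _ ≤ e + d/2 := by linarith
      _ < d := by linarith
  have hcase : a ∉ H ∨ b ∉ H := by
    by_contra hcon
    push_neg at hcon
    exact hg (hab ▸ H.mul_mem hcon.1 hcon.2)
  rcases hcase with h | h
  · exact absurd (hmin a h) (not_le.2 hlena)
  · exact absurd (hmin b h) (not_le.2 hlenb)


end UniversalCoverSetup

namespace UniversalCoverSetup

variable {N : Type} [MetricSpace N] {x0 : N}

open scoped Classical in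
private noncomputable def selEl (S : UniversalCoverSetup N x0)
    (H : Subgroup (FundamentalGroup N x0)) : FundamentalGroup N x0 :=
  if h : ∃ g, g ∉ H ∧ ∀ k, k ∉ H → S.len g ≤ S.len k then h.choose else 1

open scoped Classical in
private lemma selEl_spec (S : UniversalCoverSetup N x0)
    (hcpt : ∀ (x : S.cover) (r : ℝ), IsCompact (Metric.closedBall x r))
    {H : Subgroup (FundamentalGroup N x0)} (hH : H ≠ ⊤) :
    S.selEl H ∉ H ∧ ∀ k, k ∉ H → S.len (S.selEl H) ≤ S.len k := by
  have hex := exists_min S hcpt H hH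
  unfold selEl
  rw [dif_pos hex]
  exact hex.choose_spec

private noncomputable def HSeq (S : UniversalCoverSetup N x0) :
    ℕ → Subgroup (FundamentalGroup N x0)
  | 0 => ⊥
  | n+1 => HSeq S n ⊔ Subgroup.closure {S.selEl (HSeq S n)}

private noncomputable def gSeq (S : UniversalCoverSetup N x0) (n : ℕ) :
    FundamentalGroup N x0 :=
  S.selEl (S.HSeq n)

private lemma HSeq_eq (S : UniversalCoverSetup N x0) :
    ∀ n, S.HSeq n = Subgroup.closure {h | ∃ j, j < n ∧ S.gSeq j = h} := by
  intro n
  induction n with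
  | zero =>
    have : {h | ∃ j, j < 0 ∧ S.gSeq j = h} = (∅ : Set (FundamentalGroup N x0)) := by
      ext h; simp
    rw [HSeq, this, Subgroup.closure_empty]
  | succ n ih =>
    have hset : {h | ∃ j, j < n + 1 ∧ S.gSeq j = h} =
        {h | ∃ j, j < n ∧ S.gSeq j = h} ∪ {S.gSeq n} := by
      ext h
      simp only [Set.mem_setOf_eq, Set.mem_union, Set.mem_singleton_iff]
      constructor
      · rintro ⟨j, hj, rfl⟩
        rcases Nat.lt_succ_iff_lt_or_eq.1 hj with h | h
        · exact Or.inl ⟨j, h, rfl⟩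
        · subst h; exact Or.inr rfl
      · rintro (⟨j, hj, rfl⟩ | rfl)
        · exact ⟨j, hj.trans (Nat.lt_succ_self n), rfl⟩
        · exact ⟨n, Nat.lt_succ_self n, rfl⟩
    rw [HSeq, hset, Subgroup.closure_union,
      show S.selEl (S.HSeq n) = S.gSeq n from rfl, ih]

end UniversalCoverSetup

end Auxiliary

/-- **Halfway Lemma.**  Let `N` be a complete Riemannian manifold with base point `x0`.
Then there is an ordered set (finite of size `m`, or an infinite sequence; infinite
whenever `π₁(N,x0)` is infinitely generated) of independent generators `g_1, g_2, …` of
`π₁(N, x0)` having minimal representative geodesic loops `γ_k = proj ∘ γ̃_k` of length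
`d_k = d_Ñ(x̃0, g_k x̃0)` which are halfway minimal: `d_N(γ_k(0), γ_k(d_k/2)) = d_k/2`. -/
theorem halfway_lemma
    (n : ℕ) (N : Type) [MetricSpace N]
    [ChartedSpace (EuclideanSpace ℝ (Fin n)) N] [IsManifold (𝓡 n) (⊤ : ℕ∞) N]
    [CompleteSpace N] [PathConnectedSpace N] (hgeo : IsGeodesicMetricSpace N)
    (x0 : N) (S : UniversalCoverSetup N x0) :
    ∃ (m : ℕ∞) (g : ℕ → FundamentalGroup N x0),
      (¬ Group.FG (FundamentalGroup N x0) → m = ⊤) ∧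
      Subgroup.closure {h | ∃ i : ℕ, (i : ℕ∞) < m ∧ g i = h} = ⊤ ∧
      (∀ i : ℕ, (i : ℕ∞) < m →
        g i ∉ Subgroup.closure {h | ∃ j : ℕ, j < i ∧ g j = h}) ∧
      (∀ i : ℕ, (i : ℕ∞) < m → ∃ γt : ℝ → S.cover, S.IsMinRepLift (g i) γt ∧
        dist (S.proj (γt 0)) (S.proj (γt (S.len (g i) / 2))) = S.len (g i) / 2) := by
  classical
  haveI : LocallyCompactSpace N :=
    ChartedSpace.locallyCompactSpace (EuclideanSpace ℝ (Fin n)) N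
  have hNloc : ∀ q : N, ∃ ε > (0:ℝ), IsCompact (Metric.closedBall q ε) := by
    intro q
    obtain ⟨K, hKc, hKn⟩ := exists_compact_mem_nhds q
    obtain ⟨ε, εpos, hball⟩ := Metric.mem_nhds_iff.1 hKn
    exact ⟨ε/2, by linarith, hKc.of_isClosed_subset Metric.isClosed_closedBall
      ((Metric.closedBall_subset_ball (by linarith)).trans hball)⟩
  have hNcpt : ∀ (q : N) (r : ℝ), IsCompact (Metric.closedBall q r) :=
    compact_closedBall_of_geodesic hgeo hNloc
  haveI := S.complete
  have hcpt : ∀ (x : S.cover) (r : ℝ), IsCompact (Metric.closedBall x r) :=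
    compact_closedBall_of_geodesic S.geodesic (S.cover_locCompact hNcpt)
  by_cases hterm : ∃ i, S.HSeq i = ⊤
  · -- finite case
    set i0 := Nat.find hterm with hi0
    have hne : ∀ i < i0, S.HSeq i ≠ ⊤ := fun i hi => Nat.find_min hterm hi
    refine ⟨(i0 : ℕ∞), S.gSeq, ?_, ?_, ?_, ?_⟩
    · intro hnfg
      exfalso
      apply hnfg
      refine Group.fg_iff.2 ⟨{h | ∃ j, j < i0 ∧ S.gSeq j = h}, ?_, ?_⟩
      · rw [← S.HSeq_eq]; exact Nat.find_spec hterm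
      · apply Set.Finite.subset ((Set.finite_Iio i0).image S.gSeq)
        rintro _ ⟨j, hj, rfl⟩
        exact ⟨j, hj, rfl⟩
    · have hset : {h | ∃ i : ℕ, (i : ℕ∞) < (i0 : ℕ∞) ∧ S.gSeq i = h}
          = {h | ∃ j, j < i0 ∧ S.gSeq j = h} := by
        ext h
        simp only [Set.mem_setOf_eq, Nat.cast_lt]
      rw [hset, ← S.HSeq_eq]
      exact Nat.find_spec hterm
    · intro i hi
      have hi' : i < i0 := by exact_mod_cast hi
      rw [← S.HSeq_eq]
      exact (S.selEl_spec hcpt (hne i hi')).1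
    · intro i hi
      have hi' : i < i0 := by exact_mod_cast hi
      exact S.halfway_key hgeo hcpt (S.selEl_spec hcpt (hne i hi')).1
        (S.selEl_spec hcpt (hne i hi')).2
  · -- infinite case
    push_neg at hterm
    refine ⟨⊤, S.gSeq, fun _ => rfl, ?_, ?_, ?_⟩
    · rw [eq_top_iff]
      intro h _
      by_contra hnot
      have hnotin : ∀ i, h ∉ S.HSeq i := by
        intro i hin
        apply hnot
        rw [S.HSeq_eq] at hin
        refine Subgroup.closure_mono ?_ hin
        rintro _ ⟨j, hj, rfl⟩
        exact ⟨j, by exact_mod_cast WithTop.coe_lt_top j, rfl⟩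
      have hlen : ∀ i, S.gSeq i ∈ {k | S.len k ≤ S.len h} := fun i =>
        (S.selEl_spec hcpt (hterm i)).2 h (hnotin i)
      have hinj : Function.Injective S.gSeq := by
        intro i j hij
        by_contra hneij
        rcases Nat.lt_or_ge i j with h' | h'
        · apply (S.selEl_spec hcpt (hterm j)).1
          show S.gSeq j ∈ S.HSeq j
          rw [← hij, S.HSeq_eq]
          exact Subgroup.subset_closure ⟨i, h', rfl⟩
        · have h'' : j < i := lt_of_le_of_ne h' fun e => hneij e.symm
          apply (S.selEl_spec hcpt (hterm i)).1
          show S.gSeq i ∈ S.HSeq i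
          rw [hij, S.HSeq_eq]
          exact Subgroup.subset_closure ⟨j, h'', rfl⟩
      exact (S.len_finite hcpt (S.len h)).not_infinite
        (Set.infinite_of_injective_forall_mem hinj hlen)
    · intro i _
      rw [← S.HSeq_eq]
      exact (S.selEl_spec hcpt (hterm i)).1
    · intro i _
      exact S.halfway_key hgeo hcpt (S.selEl_spec hcpt (hterm i)).1
        (S.selEl_spec hcpt (hterm i)).2
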